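/- Suppose the linear design condition (LDC) holds: for every b ∈ ℝ^p there exist scalars a₀, a₁, …, a_K such that E[bᵀX | σ(BᵀX)] = a₀ + Σᵢ aᵢ βᵢᵀX almost surely. Then E[X | σ(BᵀX)] = μ + Σ B (BᵀΣB)⁻¹ Bᵀ (X − μ) almost surely. -/

import Mathlib

open MeasureTheory ProbabilityTheory Matrix

/-- the linear design condition implies
`E[X | σ(BᵀX)] = μ + Σ B (BᵀΣB)⁻¹ Bᵀ (X − μ)` a.s. (componentwise). -/
theorem stmt_7 {Ω : Type*} [MeasurableSpace Ω] (P : Measure Ω) [IsProbabilityMeasure P]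
    {p K : ℕ} (X : Ω → Fin p → ℝ) (hX : Measurable X)
    (hX2 : ∀ i, MemLp (fun ω => X ω i) 2 P)
    (μ : Fin p → ℝ) (hμ : ∀ i, μ i = ∫ ω, X ω i ∂P)
    (Sig : Matrix (Fin p) (Fin p) ℝ)
    (hSig : ∀ i j, Sig i j = ∫ ω, (X ω i - μ i) * (X ω j - μ j) ∂P)
    (hSigInv : IsUnit Sig.det)
    (β : Fin K → (Fin p → ℝ)) (B : Matrix (Fin p) (Fin K) ℝ) (hB : ∀ i k, B i k = β k i)
    (hBSB : IsUnit (Bᵀ * Sig * B).det)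
    (hLDC : ∀ b : Fin p → ℝ, ∃ (a₀ : ℝ) (a : Fin K → ℝ),
      P[(fun ω => b ⬝ᵥ X ω) | MeasurableSpace.comap (fun ω => Bᵀ *ᵥ X ω) inferInstance]
        =ᵐ[P] fun ω => a₀ + ∑ k, a k * (β k ⬝ᵥ X ω)) :
    ∀ i, P[(fun ω => X ω i) | MeasurableSpace.comap (fun ω => Bᵀ *ᵥ X ω) inferInstance]
      =ᵐ[P] fun ω => μ i + ((Sig * B * (Bᵀ * Sig * B)⁻¹ * Bᵀ) *ᵥ (X ω - μ)) i := by
  intro i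
  -- basic integrability facts
  have hXi : ∀ j, Integrable (fun ω => X ω j) P := fun j => (hX2 j).integrable one_le_two
  have hmul : ∀ (f g : Ω → ℝ), MemLp f 2 P → MemLp g 2 P →
      Integrable (fun ω => f ω * g ω) P := by
    intro f g hf hg
    have : MemLp (f • g) 1 P := hg.smul hf (hpqr := ⟨by norm_num [ENNReal.inv_two_add_inv_two]⟩)
    exact this.integrable le_rfl
  have hXmul : ∀ j j', Integrable (fun ω => X ω j * X ω j') P :=
    fun j j' => hmul _ _ (hX2 j) (hX2 j')
  -- integral of X
  have hI1 : ∀ j, ∫ ω, X ω j ∂P = μ j := fun j => (hμ j).symm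
  -- integral of products
  have hI2 : ∀ j j', ∫ ω, X ω j * X ω j' ∂P = Sig j j' + μ j * μ j' := by
    intro j j'
    have hfe : (fun ω => (X ω j - μ j) * (X ω j' - μ j'))
        = fun ω => X ω j * X ω j' - μ j' * X ω j - μ j * X ω j' + μ j * μ j' := by
      funext ω; ring
    have h1 : Integrable (fun ω => X ω j * X ω j' - μ j' * X ω j) P :=
      (hXmul j j').sub ((hXi j).const_mul _)
    have h2 : Integrable (fun ω => X ω j * X ω j' - μ j' * X ω j - μ j * X ω j') P :=
      h1.sub ((hXi j').const_mul _)
    have := hSig j j'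
    rw [hfe, integral_add h2 (integrable_const _), integral_sub h1 ((hXi j').const_mul _),
      integral_sub (hXmul j j') ((hXi j).const_mul _), integral_const_mul, integral_const_mul,
      hI1, hI1, integral_const, measureReal_def, measure_univ, ENNReal.toReal_one, smul_eq_mul, one_mul] at this
    linarith
  -- measurability of the conditioning map
  have hmeas : Measurable (fun ω => Bᵀ *ᵥ X ω) := by
    apply measurable_pi_lambda
    intro k
    simp only [Matrix.mulVec, dotProduct]
    exact Finset.measurable_sum _ fun j _ =>
      (measurable_const.mul ((measurable_pi_apply j).comp hX))
  set m := MeasurableSpace.comap (fun ω => Bᵀ *ᵥ X ω) inferInstance with hm_def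
  have hm : m ≤ _ := hmeas.comap_le
  haveI : SigmaFinite (P.trim hm) := by
    exact IsFiniteMeasure.toSigmaFinite _
  -- get the LDC coefficients
  obtain ⟨a₀, a, h⟩ := hLDC (Pi.single i 1)
  have hsingle : (fun ω => (Pi.single i 1 : Fin p → ℝ) ⬝ᵥ X ω) = fun ω => X ω i := by
    funext ω
    simp [dotProduct, Pi.single_apply]
  rw [hsingle] at h
  -- Y and ν
  set Y : Fin K → Ω → ℝ := fun k ω => ∑ j, B j k * X ω j with hY_def
  have hβY : ∀ k ω, β k ⬝ᵥ X ω = Y k ω := by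
    intro k ω
    simp only [dotProduct, hY_def]
    exact Finset.sum_congr rfl fun j _ => by rw [hB]
  set ν : Fin K → ℝ := fun k => ∑ j, B j k * μ j with hν_def
  have hYmem : ∀ k, MemLp (Y k) 2 P := by
    intro k
    have : MemLp (fun ω => ∑ j, B j k * X ω j) 2 P :=
      memLp_finset_sum _ fun j _ => (hX2 j).const_mul _
    exact this
  have hYint : ∀ k, Integrable (Y k) P := fun k => (hYmem k).integrable one_le_two
  have hIY : ∀ k, ∫ ω, Y k ω ∂P = ν k := by
    intro k
    rw [hY_def]
    simp only
    rw [integral_finset_sum _ fun j _ => (hXi j).const_mul _]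
    exact Finset.sum_congr rfl fun j _ => by rw [integral_const_mul, hI1]
  -- the conditional expectation function is integrable version
  have hcond : (fun ω => a₀ + ∑ k, a k * Y k ω)
      = fun ω => a₀ + ∑ k, a k * (β k ⬝ᵥ X ω) := by
    funext ω; congr 1; exact Finset.sum_congr rfl fun k _ => by rw [hβY]
  rw [← hcond] at h
  -- Equation E0 : μ i = a₀ + ∑ k, a k * ν k
  have hRHSint : Integrable (fun ω => a₀ + ∑ k, a k * Y k ω) P := by
    refine (integrable_const _).add ?_
    exact integrable_finset_sum _ fun k _ => (hYint k).const_mul _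
  have E0 : μ i = a₀ + ∑ k, a k * ν k := by
    have h1 : ∫ ω, (P[(fun ω => X ω i)|m]) ω ∂P = ∫ ω, X ω i ∂P := integral_condExp hm
    have h2 : ∫ ω, (P[(fun ω => X ω i)|m]) ω ∂P = ∫ ω, (a₀ + ∑ k, a k * Y k ω) ∂P :=
      integral_congr_ae h
    rw [h1, hI1] at h2
    rw [h2, integral_add (integrable_const _)
      (integrable_finset_sum _ fun k _ => (hYint k).const_mul _),
      integral_const, measureReal_def, measure_univ, ENNReal.toReal_one, smul_eq_mul, one_mul,
      integral_finset_sum _ fun k _ => (hYint k).const_mul _]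
    congr 1
    exact Finset.sum_congr rfl fun k _ => by rw [integral_const_mul, hIY]
  -- Equation E1 for each l
  have hYsm : ∀ l, StronglyMeasurable[m] (Y l) := by
    intro l
    have hf : Measurable[m] (fun ω => Bᵀ *ᵥ X ω) := fun s hs => ⟨s, hs, rfl⟩
    have : Measurable[m] (fun ω => (Bᵀ *ᵥ X ω) l) := (measurable_pi_apply l).comp hf
    have heq : (fun ω => (Bᵀ *ᵥ X ω) l) = Y l := by
      funext ω
      simp only [Matrix.mulVec, dotProduct, Matrix.transpose_apply, hY_def]
    rw [heq] at this
    exact this.stronglyMeasurable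
  have hIYX : ∀ l, ∫ ω, Y l ω * X ω i ∂P = ∑ j, B j l * (Sig j i + μ j * μ i) := by
    intro l
    have he : (fun ω => Y l ω * X ω i) = fun ω => ∑ j, B j l * (X ω j * X ω i) := by
      funext ω; rw [hY_def]; simp only; rw [Finset.sum_mul]
      exact Finset.sum_congr rfl fun j _ => by ring
    rw [he, integral_finset_sum _ fun j _ => ((hXmul j i).const_mul _)]
    exact Finset.sum_congr rfl fun j _ => by rw [integral_const_mul, hI2]
  have hIYY : ∀ l k, ∫ ω, Y l ω * Y k ω ∂P
      = ∑ j, ∑ j', B j l * B j' k * (Sig j j' + μ j * μ j') := by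
    intro l k
    have he : (fun ω => Y l ω * Y k ω)
        = fun ω => ∑ j, ∑ j', B j l * B j' k * (X ω j * X ω j') := by
      funext ω; rw [hY_def]; simp only; rw [Finset.sum_mul_sum]
      exact Finset.sum_congr rfl fun j _ => Finset.sum_congr rfl fun j' _ => by ring
    rw [he, integral_finset_sum _ fun j _ =>
      integrable_finset_sum _ fun j' _ => ((hXmul j j').const_mul _)]
    refine Finset.sum_congr rfl fun j _ => ?_
    rw [integral_finset_sum _ fun j' _ => ((hXmul j j').const_mul _)]
    exact Finset.sum_congr rfl fun j' _ => by rw [integral_const_mul, hI2]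
  have E1 : ∀ l, ∑ j, B j l * (Sig j i + μ j * μ i)
      = a₀ * ν l + ∑ k, a k * (∑ j, ∑ j', B j l * B j' k * (Sig j j' + μ j * μ j')) := by
    intro l
    have hint1 : Integrable (fun ω => Y l ω * X ω i) P := hmul _ _ (hYmem l) (hX2 i)
    have hpull : P[(Y l * fun ω => X ω i)|m] =ᵐ[P] Y l * P[(fun ω => X ω i)|m] :=
      condExp_mul_of_stronglyMeasurable_left (hYsm l) hint1 (hXi i)
    have h3 : ∫ ω, Y l ω * X ω i ∂P = ∫ ω, Y l ω * (a₀ + ∑ k, a k * Y k ω) ∂P := by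
      have e1 : ∫ ω, Y l ω * X ω i ∂P = ∫ ω, (P[(Y l * fun ω => X ω i)|m]) ω ∂P :=
        (integral_condExp hm).symm
      have e2 : ∫ ω, (P[(Y l * fun ω => X ω i)|m]) ω ∂P
          = ∫ ω, Y l ω * (P[(fun ω => X ω i)|m]) ω ∂P := integral_congr_ae hpull
      have e3 : ∫ ω, Y l ω * (P[(fun ω => X ω i)|m]) ω ∂P
          = ∫ ω, Y l ω * (a₀ + ∑ k, a k * Y k ω) ∂P := by
        refine integral_congr_ae ?_
        filter_upwards [h] with ω hω
        rw [hω]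
      rw [e1, e2, e3]
    rw [hIYX] at h3
    rw [h3]
    have he : (fun ω => Y l ω * (a₀ + ∑ k, a k * Y k ω))
        = fun ω => a₀ * Y l ω + ∑ k, a k * (Y l ω * Y k ω) := by
      funext ω
      rw [mul_add, Finset.mul_sum]
      congr 1
      · ring
      · exact Finset.sum_congr rfl fun k _ => by ring
    rw [he, integral_add ((hYint l).const_mul _)
      (integrable_finset_sum _ fun k _ => ((hmul _ _ (hYmem l) (hYmem k)).const_mul _)),
      integral_const_mul, hIY,
      integral_finset_sum _ fun k _ => ((hmul _ _ (hYmem l) (hYmem k)).const_mul _)]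
    congr 1
    exact Finset.sum_congr rfl fun k _ => by rw [integral_const_mul, hIYY]
  -- Symmetry of Sig
  have hSigSymm : ∀ j j', Sig j j' = Sig j' j := by
    intro j j'
    rw [hSig, hSig]
    exact integral_congr_ae (Filter.Eventually.of_forall fun ω => by ring)
  -- key vector equation: (Bᵀ * Sig * B) *ᵥ a = s  where s l = ∑ j, B j l * Sig j i
  have hkey : ∀ l, ((Bᵀ * Sig * B) *ᵥ a) l = ∑ j, B j l * Sig j i := by
    intro l
    have e1 := E1 l
    -- split LHS of E1
    have lhs_split : ∑ j, B j l * (Sig j i + μ j * μ i)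
        = (∑ j, B j l * Sig j i) + ν l * μ i := by
      rw [hν_def]
      simp only
      rw [Finset.sum_mul, ← Finset.sum_add_distrib]
      exact Finset.sum_congr rfl fun j _ => by ring
    -- split inner double sum
    have inner_split : ∀ k, ∑ j, ∑ j', B j l * B j' k * (Sig j j' + μ j * μ j')
        = (Bᵀ * Sig * B) l k + ν l * ν k := by
      intro k
      have hM : (Bᵀ * Sig * B) l k = ∑ j, ∑ j', B j l * Sig j j' * B j' k := by
        simp only [Matrix.mul_apply, Matrix.transpose_apply, Finset.sum_mul]
        rw [Finset.sum_comm]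
      have hν2 : ν l * ν k = ∑ j, ∑ j', (B j l * μ j) * (B j' k * μ j') := by
        rw [hν_def]
        simp only
        rw [Finset.sum_mul_sum]
      rw [hM, hν2, ← Finset.sum_add_distrib]
      refine Finset.sum_congr rfl fun j _ => ?_
      rw [← Finset.sum_add_distrib]
      exact Finset.sum_congr rfl fun j' _ => by ring
    rw [lhs_split] at e1
    simp only [inner_split] at e1
    have rhs_split : ∑ k, a k * ((Bᵀ * Sig * B) l k + ν l * ν k)
        = (∑ k, (Bᵀ * Sig * B) l k * a k) + (∑ k, a k * ν k) * ν l := by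
      rw [Finset.sum_mul, ← Finset.sum_add_distrib]
      exact Finset.sum_congr rfl fun k _ => by ring
    rw [rhs_split] at e1
    rw [Matrix.mulVec, dotProduct]
    linear_combination ν l * E0 - e1
  -- a in terms of the inverse
  have hainv : ∀ k, a k = ∑ l, (Bᵀ * Sig * B)⁻¹ k l * ((Bᵀ * Sig * B) *ᵥ a) l := by
    intro k
    have : (Bᵀ * Sig * B)⁻¹ *ᵥ ((Bᵀ * Sig * B) *ᵥ a) = a := by
      rw [Matrix.mulVec_mulVec, Matrix.nonsing_inv_mul _ hBSB, Matrix.one_mulVec]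
    conv_lhs => rw [← this]
    rw [Matrix.mulVec, dotProduct]
  -- symmetry of the inverse
  have hTsymm : (Bᵀ * Sig * B)ᵀ = Bᵀ * Sig * B := by
    rw [Matrix.transpose_mul, Matrix.transpose_mul, Matrix.transpose_transpose]
    have : Sigᵀ = Sig := by
      ext j j'
      rw [Matrix.transpose_apply]
      exact hSigSymm j' j
    rw [this, Matrix.mul_assoc]
  have hinvSymm : ∀ k l, (Bᵀ * Sig * B)⁻¹ k l = (Bᵀ * Sig * B)⁻¹ l k := by
    intro k l
    have : ((Bᵀ * Sig * B)⁻¹)ᵀ = (Bᵀ * Sig * B)⁻¹ := by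
      rw [Matrix.transpose_nonsing_inv, hTsymm]
    calc (Bᵀ * Sig * B)⁻¹ k l = ((Bᵀ * Sig * B)⁻¹)ᵀ l k := rfl
      _ = (Bᵀ * Sig * B)⁻¹ l k := by rw [this]
  -- row identity : a k = (Sig * B * (Bᵀ*Sig*B)⁻¹) i k
  have haRow : ∀ k, a k = (Sig * B * (Bᵀ * Sig * B)⁻¹) i k := by
    intro k
    rw [hainv k, Matrix.mul_apply]
    rw [Finset.sum_congr rfl fun l (_ : l ∈ Finset.univ) => by rw [hkey l]]
    refine Finset.sum_congr rfl fun l _ => ?_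
    rw [Matrix.mul_apply, Finset.mul_sum, Finset.sum_mul]
    refine Finset.sum_congr rfl fun j _ => ?_
    rw [hinvSymm k l, hSigSymm j i]
    ring
  -- final pointwise identity
  have hfinal : ∀ ω, a₀ + ∑ k, a k * Y k ω
      = μ i + ((Sig * B * (Bᵀ * Sig * B)⁻¹ * Bᵀ) *ᵥ (X ω - μ)) i := by
    intro ω
    have hrh : ((Sig * B * (Bᵀ * Sig * B)⁻¹ * Bᵀ) *ᵥ (X ω - μ)) i
        = ∑ k, a k * (Y k ω - ν k) := by
      rw [Matrix.mulVec, dotProduct]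
      have : ∀ j, (Sig * B * (Bᵀ * Sig * B)⁻¹ * Bᵀ) i j * (X ω - μ) j
          = ∑ k, a k * (B j k * (X ω j - μ j)) := by
        intro j
        rw [Matrix.mul_apply, Finset.sum_mul]
        refine Finset.sum_congr rfl fun k _ => ?_
        rw [Matrix.transpose_apply, ← haRow k]
        simp only [Pi.sub_apply]
        ring
      rw [Finset.sum_congr rfl fun j _ => this j, Finset.sum_comm]
      refine Finset.sum_congr rfl fun k _ => ?_
      rw [← Finset.mul_sum, hY_def, hν_def]
      simp only
      congr 1
      rw [← Finset.sum_sub_distrib]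
      exact Finset.sum_congr rfl fun j _ => by ring
    rw [hrh]
    have : ∑ k, a k * (Y k ω - ν k) = (∑ k, a k * Y k ω) - ∑ k, a k * ν k := by
      rw [← Finset.sum_sub_distrib]
      exact Finset.sum_congr rfl fun k _ => by ring
    rw [this]
    linarith [E0]
  exact h.trans (Filter.Eventually.of_forall hfinal)
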